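/- Let ζ1 < ζ2 be reals, a > 0, and λ1, λ2 ∈ ℝ constants with (λ1, λ2) ≠ (0, 0). Let θ : [ζ1, ζ2] → ℝ be Lipschitz continuous and v : [ζ1, ζ2] → ℝ measurable with θ'(t) = a·v(t) for a.e. t. Let λ3 : [ζ1, ζ2] → ℝ be Lipschitz with λ3'(t) = λ1·sin θ(t) − λ2·cos θ(t) for a.e. t. If λ3(t) = 0 for all t ∈ [ζ1, ζ2], then θ is constant on [ζ1, ζ2] and v(t) = 0 for a.e. t ∈ [ζ1, ζ2]. -/

import Mathlib

open Set MeasureTheory Real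

noncomputable section

/-- Points of the Euclidean plane. -/
abbrev Pt : Type := EuclideanSpace ℝ (Fin 2)

/-- The point of the plane with coordinates `(x, y)`. -/
def pt (x y : ℝ) : Pt := (WithLp.equiv 2 (Fin 2 → ℝ)).symm ![x, y]

/-- Rotation of the plane by `π/2`. -/
def J (v : Pt) : Pt := pt (-(v 1)) (v 0)

/-- `z`, with derivative `z'`, is an admissible curve on `[t1, t2]` for the oriented
endpoint data `(p0, u0)`, `(p1, u1)`: it is differentiable with Lipschitz (hence
continuous) derivative `z'`, has unit speed, and matches the endpoint data. -/
def AdmissibleOn (t1 t2 : ℝ) (p0 u0 p1 u1 : Pt) (z z' : ℝ → Pt) : Prop :=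
  (∀ t ∈ Icc t1 t2, HasDerivWithinAt z (z' t) (Icc t1 t2) t) ∧
  (∃ K : NNReal, LipschitzOnWith K z' (Icc t1 t2)) ∧
  (∀ t ∈ Icc t1 t2, ‖z' t‖ = 1) ∧
  z t1 = p0 ∧ z t2 = p1 ∧ z' t1 = u0 ∧ z' t2 = u1

/-- The maximum curvature of a unit-speed curve with derivative `z'` on the set `s`:
the least Lipschitz constant of `z'` on `s` (equivalently, the essential supremum
of the norm of the second derivative). -/
def maxCurvOn (s : Set ℝ) (z' : ℝ → Pt) : ℝ :=
  sInf {a : ℝ | 0 ≤ a ∧ LipschitzOnWith (Real.toNNReal a) z' s}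

/-- The piece `[s1, s2]` of the unit-speed curve with derivative `z'` is a circular
arc of signed curvature `ω`: `z'' = ω • J z'` a.e. there. -/
def IsArcOn (z' : ℝ → Pt) (ω s1 s2 : ℝ) : Prop :=
  ∀ᵐ t ∂volume, t ∈ Ioo s1 s2 → HasDerivAt z' (ω • J (z' t)) t

/-- The piece `[s1, s2]` of the unit-speed curve with derivative `z'` is a straight
line segment: `z'` is constant there. -/
def IsLineOn (z' : ℝ → Pt) (s1 s2 : ℝ) : Prop :=
  ∀ s ∈ Icc s1 s2, ∀ t ∈ Icc s1 s2, z' s = z' t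

/-- The piece `[s1, s2]` is a full circular loop of curvature `a`: a circular arc of
signed curvature `±a` whose turning angle is a positive integer multiple of `2π`. -/
def IsFullLoopOn (z' : ℝ → Pt) (a s1 s2 : ℝ) : Prop :=
  ∃ ω : ℝ, |ω| = a ∧ IsArcOn z' ω s1 s2 ∧ ∃ k : ℕ, 0 < k ∧ a * (s2 - s1) = 2 * π * k

/-- Lemma 1 of the paper: singularity and straight line segments.
If the switching function `l3` vanishes identically on `[ζ1, ζ2]`, then the tangent
angle `θ` is constant on `[ζ1, ζ2]` and (since `a > 0`) the control `v` vanishes a.e.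
there. -/
theorem stmt4 (ζ1 ζ2 a l1 l2 : ℝ) (hζ : ζ1 < ζ2) (ha : 0 < a)
    (hl : (l1, l2) ≠ (0, 0))
    (θ v l3 : ℝ → ℝ)
    (hθlip : ∃ K : NNReal, LipschitzOnWith K θ (Icc ζ1 ζ2))
    (hvmeas : Measurable v)
    (hθ' : ∀ᵐ t ∂volume, t ∈ Icc ζ1 ζ2 → HasDerivAt θ (a * v t) t)
    (hl3lip : ∃ K : NNReal, LipschitzOnWith K l3 (Icc ζ1 ζ2))
    (hl3' : ∀ᵐ t ∂volume, t ∈ Icc ζ1 ζ2 →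
      HasDerivAt l3 (l1 * Real.sin (θ t) - l2 * Real.cos (θ t)) t)
    (hl30 : ∀ t ∈ Icc ζ1 ζ2, l3 t = 0) :
    (∀ s ∈ Icc ζ1 ζ2, ∀ t ∈ Icc ζ1 ζ2, θ s = θ t) ∧
      (∀ᵐ t ∂volume, t ∈ Icc ζ1 ζ2 → v t = 0) := by
  set g : ℝ → ℝ := fun t => l1 * Real.sin (θ t) - l2 * Real.cos (θ t) with hg
  have huniq : UniqueDiffOn ℝ (Icc ζ1 ζ2) := uniqueDiffOn_Icc hζ
  -- Step 1: a.e. on Ioo, g = 0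
  have step1 : ∀ᵐ t ∂volume, t ∈ Ioo ζ1 ζ2 → g t = 0 := by
    filter_upwards [hl3'] with t ht htI
    have htIcc : t ∈ Icc ζ1 ζ2 := Ioo_subset_Icc_self htI
    have h1 : HasDerivWithinAt l3 (g t) (Icc ζ1 ζ2) t := (ht htIcc).hasDerivWithinAt
    have h2 : HasDerivWithinAt l3 0 (Icc ζ1 ζ2) t := by
      have : HasDerivWithinAt (fun _ : ℝ => (0:ℝ)) 0 (Icc ζ1 ζ2) t :=
        hasDerivWithinAt_const _ _ _
      exact this.congr (fun s hs => (hl30 s hs)) (hl30 t htIcc)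
    have e1 := h1.derivWithin (huniq t htIcc)
    have e2 := h2.derivWithin (huniq t htIcc)
    rw [e1] at e2; exact e2
  -- continuity of θ, hence g, on Icc
  obtain ⟨K, hK⟩ := hθlip
  have hθc : ContinuousOn θ (Icc ζ1 ζ2) := hK.continuousOn
  have hgc : ContinuousOn g (Icc ζ1 ζ2) := by
    exact (continuousOn_const.mul (Real.continuous_sin.comp_continuousOn hθc)).sub
      (continuousOn_const.mul (Real.continuous_cos.comp_continuousOn hθc))
  -- Step 2: g = 0 on all of Icc
  have step2 : ∀ t ∈ Icc ζ1 ζ2, g t = 0 := by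
    set Z : Set ℝ := {t | t ∈ Ioo ζ1 ζ2 ∧ g t = 0} with hZ
    have hnull : volume {t | ¬ (t ∈ Ioo ζ1 ζ2 → g t = 0)} = 0 :=
      MeasureTheory.ae_iff.mp step1
    have hdense : Ioo ζ1 ζ2 ⊆ closure Z := by
      intro x hx
      rw [_root_.mem_closure_iff]
      intro o ho hxo
      by_contra hne
      rw [Set.not_nonempty_iff_eq_empty] at hne
      have hsub : o ∩ Ioo ζ1 ζ2 ⊆ {t | ¬ (t ∈ Ioo ζ1 ζ2 → g t = 0)} := by
        intro y hy
        intro himp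
        have : y ∈ o ∩ Z := ⟨hy.1, hy.2, himp hy.2⟩
        rw [hne] at this; exact this
      have hpos : 0 < volume (o ∩ Ioo ζ1 ζ2) :=
        (ho.inter isOpen_Ioo).measure_pos volume ⟨x, hxo, hx⟩
      exact absurd (measure_mono_null hsub hnull) (ne_of_gt hpos)
    have hIccsub : Icc ζ1 ζ2 ⊆ closure Z := by
      rw [← closure_Ioo hζ.ne]
      exact closure_minimal hdense isClosed_closure
    intro t ht
    have hcl : t ∈ closure Z := hIccsub ht
    have hZsub : Z ⊆ Icc ζ1 ζ2 := fun y hy => Ioo_subset_Icc_self hy.1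
    have hcw : ContinuousWithinAt g Z t := (hgc t ht).mono hZsub
    have himg : g t ∈ closure (g '' Z) := hcw.mem_closure_image hcl
    have : g '' Z ⊆ {0} := by rintro y ⟨s, hs, rfl⟩; exact hs.2
    have : g t ∈ closure ({0} : Set ℝ) := closure_mono this himg
    simpa using this
  -- Step 3: θ is constant on Icc
  have hconst : ∀ s ∈ Icc ζ1 ζ2, ∀ t ∈ Icc ζ1 ζ2, θ s = θ t := by
    intro s hs t ht
    by_contra hne
    -- the values between θ s and θ t are all attained, and all are zeros of f
    set f : ℝ → ℝ := fun x => l1 * Real.sin x - l2 * Real.cos x with hf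
    have hsub : uIcc (θ s) (θ t) ⊆ θ '' uIcc s t := by
      apply intermediate_value_uIcc
      exact hθc.mono (uIcc_subset_Icc hs ht)
    have hfz : ∀ x ∈ uIcc (θ s) (θ t), f x = 0 := by
      intro x hx
      obtain ⟨u, hu, rfl⟩ := hsub hx
      exact step2 u (uIcc_subset_Icc hs ht hu)
    -- midpoint lies in the interior of a nondegenerate interval
    set x0 : ℝ := (θ s + θ t) / 2 with hx0
    have hlt : min (θ s) (θ t) < x0 ∧ x0 < max (θ s) (θ t) := by
      rcases lt_or_gt_of_ne hne with h | h
      · constructor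
        · calc min (θ s) (θ t) ≤ θ s := min_le_left _ _
            _ < x0 := by rw [hx0]; linarith
        · calc x0 < θ t := by rw [hx0]; linarith
            _ ≤ max (θ s) (θ t) := le_max_right _ _
      · constructor
        · calc min (θ s) (θ t) ≤ θ t := min_le_right _ _
            _ < x0 := by rw [hx0]; linarith
        · calc x0 < θ s := by rw [hx0]; linarith
            _ ≤ max (θ s) (θ t) := le_max_left _ _
    have hnbhd : uIcc (θ s) (θ t) ∈ nhds x0 := by
      rw [uIcc]
      exact Icc_mem_nhds hlt.1 hlt.2
    have hev : f =ᶠ[nhds x0] (fun _ => (0:ℝ)) := by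
      filter_upwards [hnbhd] with y hy using hfz y hy
    have hfd : HasDerivAt f (l1 * Real.cos x0 + l2 * Real.sin x0) x0 := by
      have h1 : HasDerivAt (fun x => l1 * Real.sin x) (l1 * Real.cos x0) x0 :=
        (Real.hasDerivAt_sin x0).const_mul l1
      have h2 : HasDerivAt (fun x => l2 * Real.cos x) (l2 * (-Real.sin x0)) x0 :=
        (Real.hasDerivAt_cos x0).const_mul l2
      have := h1.sub h2
      rw [show l1 * Real.cos x0 + l2 * Real.sin x0 = l1 * Real.cos x0 - l2 * (-Real.sin x0) by ring]
      exact this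
    have hd0 : deriv f x0 = 0 := by
      rw [hev.deriv_eq]
      simp
    have hB : l1 * Real.cos x0 + l2 * Real.sin x0 = 0 := by
      rw [← hfd.deriv]; exact hd0
    have hA : l1 * Real.sin x0 - l2 * Real.cos x0 = 0 :=
      hfz x0 (by rw [uIcc]; exact ⟨le_of_lt hlt.1, le_of_lt hlt.2⟩)
    have hsc := Real.sin_sq_add_cos_sq x0
    have hl1 : l1 = 0 := by
      linear_combination Real.sin x0 * hA + Real.cos x0 * hB - l1 * hsc
    have hl2 : l2 = 0 := by
      linear_combination -Real.cos x0 * hA + Real.sin x0 * hB - l2 * hsc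
    exact hl (by rw [hl1, hl2])
  refine ⟨hconst, ?_⟩
  -- Step 4: v = 0 a.e.
  have hnull2 : ∀ᵐ t ∂volume, t ∉ ({ζ1, ζ2} : Set ℝ) := by
    have h2 : volume ({ζ1, ζ2} : Set ℝ) = 0 := by
      rw [Set.insert_eq]
      exact measure_union_null (measure_singleton _) (measure_singleton _)
    rw [MeasureTheory.ae_iff]
    simp only [not_not, Set.setOf_mem_eq]
    exact h2
  filter_upwards [hθ', hnull2] with t ht htn htIcc
  have htIoo : t ∈ Ioo ζ1 ζ2 := by
    rcases htIcc.1.lt_or_eq with h | h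
    · rcases htIcc.2.lt_or_eq with h2 | h2
      · exact ⟨h, h2⟩
      · exact absurd (by simp [h2]) htn
    · exact absurd (by simp [← h]) htn
  have h1 : HasDerivWithinAt θ (a * v t) (Icc ζ1 ζ2) t := (ht htIcc).hasDerivWithinAt
  have h2 : HasDerivWithinAt θ 0 (Icc ζ1 ζ2) t := by
    have hc : HasDerivWithinAt (fun _ : ℝ => θ ζ1) 0 (Icc ζ1 ζ2) t :=
      hasDerivWithinAt_const _ _ _
    exact hc.congr (fun s hs => hconst s hs ζ1 (left_mem_Icc.mpr hζ.le))
      (hconst t htIcc ζ1 (left_mem_Icc.mpr hζ.le))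
  have e1 := h1.derivWithin (huniq t htIcc)
  have e2 := h2.derivWithin (huniq t htIcc)
  rw [e1] at e2
  exact (mul_eq_zero.mp e2).resolve_left (ne_of_gt ha)
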